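/- Let E be an F-Dedekind complete sublattice of a vector lattice F. If a sequence {x_n} in E is F-order convergent to 0, then {x_n} is order bounded in E. -/
import Mathlib


/-- A net `x` in a vector lattice `F` is `F`-order convergent to `a`: there is a
nonempty downward-directed family `D` in `F` with infimum `0` (the range of a net
`y_β ↓ 0` in `F`) such that for each `d ∈ D`, eventually `|x α - a| ≤ d`. -/
def FOrderConv {F : Type*} [Lattice F] [AddCommGroup F] {ι : Type*} [Preorder ι]
    (x : ι → F) (a : F) : Prop :=
  ∃ D : Set F, D.Nonempty ∧ DirectedOn (· ≥ ·) D ∧ IsGLB D 0 ∧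
    ∀ d ∈ D, ∃ α₀ : ι, ∀ α, α₀ ≤ α → |x α - a| ≤ d

/-- Order convergence relative to a sublattice `E` of `F`: the dominating family lies
in `E` and decreases to `0` *in `E`* (`0` is its greatest lower bound among elements
of `E`). -/
def OrderConvIn {F : Type*} [Lattice F] [AddCommGroup F] (E : Set F) {ι : Type*} [Preorder ι]
    (x : ι → F) (a : F) : Prop :=
  ∃ D : Set F, D ⊆ E ∧ D.Nonempty ∧ DirectedOn (· ≥ ·) D ∧
    (0 ∈ lowerBounds D ∧ ∀ b ∈ E, b ∈ lowerBounds D → b ≤ 0) ∧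
    ∀ d ∈ D, ∃ α₀ : ι, ∀ α, α₀ ≤ α → |x α - a| ≤ d

/-- If `E` is an `F`-Dedekind complete sublattice of `F` and a sequence in `E` is
`F`-order convergent to `0`, then the sequence is order bounded in `E`. -/
theorem orderBounded_of_fOrderConv {F : Type*} [Lattice F] [AddCommGroup F]
    [CovariantClass F F (· + ·) (· ≤ ·)] [Module ℝ F]
    (E : Set F)
    (hEsup : ∀ a ∈ E, ∀ b ∈ E, a ⊔ b ∈ E) (hEinf : ∀ a ∈ E, ∀ b ∈ E, a ⊓ b ∈ E)
    (hEadd : ∀ a ∈ E, ∀ b ∈ E, a + b ∈ E) (hEsmul : ∀ (c : ℝ), ∀ a ∈ E, c • a ∈ E)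
    (hFDC : ∀ A : Set F, A ⊆ E → A.Nonempty → BddAbove A → ∃ s ∈ E, IsLUB A s)
    (x : ℕ → F) (hx : ∀ n, x n ∈ E)
    (h : FOrderConv x 0) :
    ∃ b ∈ E, ∀ n, |x n| ≤ b := by
  obtain ⟨D, ⟨d, hd⟩, -, -, hconv⟩ := h
  obtain ⟨α₀, hα₀⟩ := hconv d hd
  set A : Set F := Set.range (fun n => |x n|) with hA
  have hAE : A ⊆ E := by
    rintro _ ⟨n, rfl⟩
    have hneg : -x n ∈ E := by
      have := hEsmul (-1 : ℝ) (x n) (hx n)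
      rwa [neg_one_smul] at this
    show |x n| ∈ E
    rw [show |x n| = x n ⊔ -x n from rfl]
    exact hEsup _ (hx n) _ hneg
  have hbdd : BddAbove A := by
    refine ⟨(Finset.range (α₀ + 1)).sup' (by simp) (fun n => |x n|) ⊔ d, ?_⟩
    rintro _ ⟨n, rfl⟩
    rcases le_or_gt α₀ n with hn | hn
    · have := hα₀ n hn
      rw [sub_zero] at this
      exact le_sup_of_le_right this
    · exact le_sup_of_le_left
        (Finset.le_sup' (fun n => |x n|) (Finset.mem_range.mpr (by omega)))
  obtain ⟨s, hsE, hs⟩ := hFDC A hAE ⟨|x 0|, ⟨0, rfl⟩⟩ hbdd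
  exact ⟨s, hsE, fun n => hs.1 ⟨n, rfl⟩⟩
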